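/- arXiv:2011.07633 — 2 statements merged into one kernel-verified Lean document; each statement's English description precedes it below -/
import Mathlib

section
/- Let S be a finite set and let ρ_u, ρ_v : S → ℝ≥0 be probability mass functions of random variables U and V. Let F : S → {0,1} be a (deterministic) function. Fix μ > 0 and let Z₁ = {s ∈ S : ρ_u(s) > μ·ρ_v(s)}, Z₂ = {s ∈ S : ρ_u(s) = μ·ρ_v(s)}, and let Z = Z₁ ∪ Z₃ for some Z₃ ⊆ Z₂. If Pr(F(U)=1) ≥ Pr(U ∈ Z), then Pr(F(V)=1) ≥ Pr(V ∈ Z). -/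
open scoped Classical

/-- Discrete Neyman–Pearson lemma, first direction. -/
theorem stmt_0 {S : Type*} [Fintype S] (ρu ρv : S → ℝ)
    (hu0 : ∀ s, 0 ≤ ρu s) (hv0 : ∀ s, 0 ≤ ρv s)
    (hu1 : ∑ s, ρu s = 1) (hv1 : ∑ s, ρv s = 1)
    (F : S → Bool) (μ : ℝ) (hμ : 0 < μ)
    (Z₃ : Finset S)
    (hZ₃ : Z₃ ⊆ Finset.univ.filter (fun s => ρu s = μ * ρv s))
    (Z : Finset S)
    (hZ : Z = Finset.univ.filter (fun s => ρu s > μ * ρv s) ∪ Z₃)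
    (h : ∑ s ∈ Z, ρu s ≤ ∑ s ∈ Finset.univ.filter (fun s => F s = true), ρu s) :
    ∑ s ∈ Z, ρv s ≤ ∑ s ∈ Finset.univ.filter (fun s => F s = true), ρv s := by
  set A := Finset.univ.filter (fun s => F s = true) with hA
  have h1 : ∀ s ∈ Z, μ * ρv s ≤ ρu s := by
    intro s hs
    rw [hZ, Finset.mem_union] at hs
    rcases hs with hs | hs
    · exact le_of_lt (Finset.mem_filter.mp hs).2
    · exact le_of_eq ((Finset.mem_filter.mp (hZ₃ hs)).2).symm
  have h2 : ∀ s, s ∉ Z → ρu s ≤ μ * ρv s := by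
    intro s hs
    rw [hZ, Finset.mem_union] at hs
    push_neg at hs
    have := hs.1
    simp only [Finset.mem_filter, Finset.mem_univ, true_and, not_lt] at this
    exact this
  -- decompose sums
  have dZ : ∀ f : S → ℝ, ∑ s ∈ Z, f s = ∑ s ∈ Z \ A, f s + ∑ s ∈ Z ∩ A, f s := by
    intro f
    rw [← Finset.sum_inter_add_sum_sdiff Z A f]
    ring
  have dA : ∀ f : S → ℝ, ∑ s ∈ A, f s = ∑ s ∈ A \ Z, f s + ∑ s ∈ Z ∩ A, f s := by
    intro f
    rw [← Finset.sum_inter_add_sum_sdiff A Z f, Finset.inter_comm]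
    ring
  have hmid : ∑ s ∈ Z \ A, ρu s ≤ ∑ s ∈ A \ Z, ρu s := by
    have := h
    rw [dZ ρu, dA ρu] at this
    linarith
  have hl : μ * ∑ s ∈ Z \ A, ρv s ≤ ∑ s ∈ Z \ A, ρu s := by
    rw [Finset.mul_sum]
    exact Finset.sum_le_sum fun s hs => h1 s (Finset.mem_sdiff.mp hs).1
  have hr : ∑ s ∈ A \ Z, ρu s ≤ μ * ∑ s ∈ A \ Z, ρv s := by
    rw [Finset.mul_sum]
    exact Finset.sum_le_sum fun s hs => h2 s (Finset.mem_sdiff.mp hs).2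
  have hv : ∑ s ∈ Z \ A, ρv s ≤ ∑ s ∈ A \ Z, ρv s :=
    le_of_mul_le_mul_left (by linarith) hμ
  rw [dZ ρv, dA ρv]
  linarith
end

section
/- Let S be a finite set and let ρ_u, ρ_v : S → ℝ≥0 be probability mass functions. Let F : S → {0,1}. Fix μ > 0 and let Z₁ = {s ∈ S : ρ_u(s) < μ·ρ_v(s)}, Z₂ = {s ∈ S : ρ_u(s) = μ·ρ_v(s)}, and Z = Z₁ ∪ Z₃ for some Z₃ ⊆ Z₂. If Pr(F(U)=1) ≤ Pr(U ∈ Z), then Pr(F(V)=1) ≤ Pr(V ∈ Z). -/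
open scoped Classical

/-- Discrete Neyman–Pearson lemma, second direction. -/
theorem stmt_1 {S : Type*} [Fintype S] (ρu ρv : S → ℝ)
    (hu0 : ∀ s, 0 ≤ ρu s) (hv0 : ∀ s, 0 ≤ ρv s)
    (hu1 : ∑ s, ρu s = 1) (hv1 : ∑ s, ρv s = 1)
    (F : S → Bool) (μ : ℝ) (hμ : 0 < μ)
    (Z₃ : Finset S)
    (hZ₃ : Z₃ ⊆ Finset.univ.filter (fun s => ρu s = μ * ρv s))
    (Z : Finset S)
    (hZ : Z = Finset.univ.filter (fun s => ρu s < μ * ρv s) ∪ Z₃)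
    (h : ∑ s ∈ Finset.univ.filter (fun s => F s = true), ρu s ≤ ∑ s ∈ Z, ρu s) :
    ∑ s ∈ Finset.univ.filter (fun s => F s = true), ρv s ≤ ∑ s ∈ Z, ρv s := by
  have hmem : ∀ s ∈ Z, ρu s ≤ μ * ρv s := by
    intro s hs
    rw [hZ, Finset.mem_union] at hs
    rcases hs with hs | hs
    · exact le_of_lt (Finset.mem_filter.mp hs).2
    · exact le_of_eq (Finset.mem_filter.mp (hZ₃ hs)).2
  have hnot : ∀ s, s ∉ Z → μ * ρv s ≤ ρu s := by
    intro s hs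
    rw [hZ, Finset.mem_union] at hs
    push_neg at hs
    have h1 := hs.1
    simp only [Finset.mem_filter, Finset.mem_univ, true_and, not_lt] at h1
    exact h1
  have hpt : ∀ s, 0 ≤ ((if s ∈ Z then (1:ℝ) else 0) - (if F s then 1 else 0))
      * (μ * ρv s - ρu s) := by
    intro s
    by_cases hz : s ∈ Z
    · have h1 := hmem s hz
      by_cases hf : F s <;> simp [hz, hf] <;> linarith
    · have h1 := hnot s hz
      by_cases hf : F s <;> simp [hz, hf] <;> linarith
  have hsum : 0 ≤ ∑ s, ((if s ∈ Z then (1:ℝ) else 0) - (if F s then 1 else 0))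
      * (μ * ρv s - ρu s) := Finset.sum_nonneg fun s _ => hpt s
  have eZv : ∑ s ∈ Z, ρv s = ∑ s, if s ∈ Z then ρv s else 0 := by
    rw [Finset.sum_ite_mem, Finset.univ_inter]
  have eZu : ∑ s ∈ Z, ρu s = ∑ s, if s ∈ Z then ρu s else 0 := by
    rw [Finset.sum_ite_mem, Finset.univ_inter]
  have eFv : ∑ s ∈ Finset.univ.filter (fun s => F s = true), ρv s
      = ∑ s, if F s then ρv s else 0 := by
    rw [Finset.sum_filter]
  have eFu : ∑ s ∈ Finset.univ.filter (fun s => F s = true), ρu s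
      = ∑ s, if F s then ρu s else 0 := by
    rw [Finset.sum_filter]
  have expand : ∑ s, ((if s ∈ Z then (1:ℝ) else 0) - (if F s then 1 else 0))
      * (μ * ρv s - ρu s)
      = μ * ((∑ s, if s ∈ Z then ρv s else 0) - (∑ s, if F s then ρv s else 0))
        - ((∑ s, if s ∈ Z then ρu s else 0) - (∑ s, if F s then ρu s else 0)) := by
    simp only [mul_sub, ← Finset.mul_sum, ← Finset.sum_sub_distrib]
    rw [Finset.mul_sum, ← Finset.sum_sub_distrib]
    apply Finset.sum_congr rfl
    intro s _
    split_ifs <;> ring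
  rw [expand] at hsum
  rw [eZv, eFv]
  rw [eZu, eFu] at h
  nlinarith
end
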